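/- arXiv:math/0309014 — 2 statements merged into one kernel-verified Lean document; each statement's English description precedes it below -/
import Mathlib

section
/- Let X be a nonzero Banach space and 𝔄 a norm-closed, strictly semi-transitive subalgebra of L(X). Then the set of strictly cyclic vectors for 𝔄 is residual in X (its complement is of first category); in particular, 𝔄 has a strictly cyclic vector. -/
/-- If from `y` every vector of the form `w + w` with `‖w‖ < r` can be approximated
with operators in `𝔄` of norm at most `C`, then `y` is strictly cyclic for `𝔄`. -/
theorem cyclic_of_approx' {𝕜 X : Type*} [RCLike 𝕜]
    [NormedAddCommGroup X] [NormedSpace 𝕜 X] [CompleteSpace X]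
    (𝔄 : NonUnitalSubalgebra 𝕜 (X →L[𝕜] X))
    (hclosed : IsClosed (𝔄 : Set (X →L[𝕜] X)))
    (y : X) (C r : ℝ) (hC : 0 ≤ C) (hr : 0 < r)
    (H : ∀ w : X, ‖w‖ < r → ∀ ε : ℝ, 0 < ε →
      ∃ A ∈ 𝔄, ‖A‖ ≤ C ∧ ‖A y - (w + w)‖ < ε) :
    ∀ v : X, ∃ A ∈ 𝔄, A y = v := by
  classical
  have hBnn : 0 ≤ 2 * C / r := by positivity
  -- Step 1: linear-in-norm approximation
  have H2 : ∀ v : X, ∀ ε : ℝ, 0 < ε →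
      ∃ A ∈ 𝔄, ‖A‖ ≤ (2 * C / r) * ‖v‖ ∧ ‖A y - v‖ < ε := by
    intro v ε hε
    rcases eq_or_ne v 0 with rfl | hv
    · exact ⟨0, zero_mem _, by simp, by simpa using hε⟩
    · have hv' : 0 < ‖v‖ := norm_pos_iff.mpr hv
      set s : ℝ := r / (4 * ‖v‖) with hs_def
      have hs : 0 < s := by positivity
      have hw : ‖((s : 𝕜)) • v‖ < r := by
        rw [norm_smul ((s : ℝ) : 𝕜) v, RCLike.norm_ofReal, abs_of_pos hs]
        have : s * ‖v‖ = r / 4 := by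
          rw [hs_def]; field_simp
        rw [this]; linarith
      set t : ℝ := s + s with ht_def
      have ht : 0 < t := by rw [ht_def]; linarith
      obtain ⟨A, hA, hAn, hAe⟩ := H ((s : 𝕜) • v) hw (t * ε) (by positivity)
      have hww : (s : 𝕜) • v + (s : 𝕜) • v = ((t : ℝ) : 𝕜) • v := by
        rw [← add_smul, ht_def, RCLike.ofReal_add]
      rw [hww] at hAe
      refine ⟨((t⁻¹ : ℝ) : 𝕜) • A, SMulMemClass.smul_mem _ hA, ?_, ?_⟩
      · have hns : ‖((t⁻¹ : ℝ) : 𝕜) • A‖ = t⁻¹ * ‖A‖ := by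
          rw [norm_smul ((t⁻¹ : ℝ) : 𝕜) A, RCLike.norm_ofReal, abs_of_pos (inv_pos.mpr ht)]
        rw [hns]
        have h1 : t⁻¹ * ‖A‖ ≤ t⁻¹ * C :=
          mul_le_mul_of_nonneg_left hAn (inv_pos.mpr ht).le
        have h2 : t⁻¹ * C = (2 * C / r) * ‖v‖ := by
          have hts : t = r / (2 * ‖v‖) := by rw [ht_def, hs_def]; field_simp; ring
          rw [hts]; field_simp
        linarith
      · have hid : (((t⁻¹ : ℝ) : 𝕜) • A) y - v
            = ((t⁻¹ : ℝ) : 𝕜) • (A y - ((t : ℝ) : 𝕜) • v) := by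
          rw [smul_sub, smul_smul, ← RCLike.ofReal_mul, inv_mul_cancel₀ ht.ne',
            RCLike.ofReal_one, one_smul, ContinuousLinearMap.smul_apply]
        have hns : ‖((t⁻¹ : ℝ) : 𝕜) • (A y - ((t : ℝ) : 𝕜) • v)‖
            = t⁻¹ * ‖A y - ((t : ℝ) : 𝕜) • v‖ := by
          rw [norm_smul ((t⁻¹ : ℝ) : 𝕜) (A y - ((t : ℝ) : 𝕜) • v), RCLike.norm_ofReal,
            abs_of_pos (inv_pos.mpr ht)]
        rw [hid, hns]
        have := mul_lt_mul_of_pos_left hAe (inv_pos.mpr ht)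
        calc t⁻¹ * ‖A y - ((t : ℝ) : 𝕜) • v‖ < t⁻¹ * (t * ε) := this
          _ = ε := by field_simp
  -- Step 2: halving choice function
  have H3 : ∀ w : X, ∃ A, A ∈ 𝔄 ∧ ‖A‖ ≤ (2 * C / r) * ‖w‖ ∧ ‖A y - w‖ ≤ ‖w‖ / 2 := by
    intro w
    rcases eq_or_ne w 0 with rfl | hw
    · exact ⟨0, zero_mem _, by simp, by simp⟩
    · have hw' : 0 < ‖w‖ := norm_pos_iff.mpr hw
      obtain ⟨A, h1, h2, h3⟩ := H2 w (‖w‖ / 2) (by positivity)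
      exact ⟨A, h1, h2, h3.le⟩
  choose f hf1 hf2 hf3 using H3
  intro v
  set u : ℕ → X := fun j => (fun w => w - f w y)^[j] v with hu
  have huS : ∀ j, u (j + 1) = u j - f (u j) y := by
    intro j
    rw [hu]
    exact Function.iterate_succ_apply' _ _ _
  have hdec : ∀ j, ‖u j‖ ≤ (1 / 2 : ℝ) ^ j * ‖v‖ := by
    intro j
    induction j with
    | zero => simp [hu]
    | succ j ih =>
      rw [huS j]
      calc ‖u j - f (u j) y‖ = ‖f (u j) y - u j‖ := norm_sub_rev _ _
        _ ≤ ‖u j‖ / 2 := hf3 _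
        _ ≤ ((1 / 2 : ℝ) ^ j * ‖v‖) / 2 := by linarith
        _ = (1 / 2 : ℝ) ^ (j + 1) * ‖v‖ := by ring
  set g : ℕ → (X →L[𝕜] X) := fun j => f (u j) with hg
  have hgnorm : ∀ j, ‖g j‖ ≤ ((2 * C / r) * ‖v‖) * (1 / 2 : ℝ) ^ j := by
    intro j
    calc ‖g j‖ ≤ (2 * C / r) * ‖u j‖ := hf2 _
      _ ≤ (2 * C / r) * ((1 / 2 : ℝ) ^ j * ‖v‖) :=
          mul_le_mul_of_nonneg_left (hdec j) hBnn
      _ = ((2 * C / r) * ‖v‖) * (1 / 2 : ℝ) ^ j := by ring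
  have hsum : Summable g :=
    Summable.of_norm_bounded (summable_geometric_two.mul_left _) hgnorm
  set A := ∑' j, g j with hA
  have hAsum : HasSum g A := hsum.hasSum
  have hAmem : A ∈ 𝔄 :=
    hclosed.mem_of_tendsto hAsum
      (Filter.Eventually.of_forall fun s => sum_mem fun i _ => hf1 _)
  refine ⟨A, hAmem, ?_⟩
  have hpart : ∀ m, (∑ j ∈ Finset.range m, g j) y = v - u m := by
    intro m
    have h1 : (∑ j ∈ Finset.range m, g j) y = ∑ j ∈ Finset.range m, (g j) y := by
      simp [ContinuousLinearMap.sum_apply]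
    have h2 : ∀ j, (g j) y = u j - u (j + 1) := by
      intro j
      rw [huS j]; abel
    rw [h1]
    simp_rw [h2]
    rw [Finset.sum_range_sub' u]
    simp [hu]
  have humto : Filter.Tendsto u Filter.atTop (nhds 0) := by
    apply squeeze_zero_norm hdec
    have h0 : Filter.Tendsto (fun j : ℕ => (1 / 2 : ℝ) ^ j) Filter.atTop (nhds 0) :=
      tendsto_pow_atTop_nhds_zero_of_lt_one (by norm_num) (by norm_num)
    simpa using h0.mul_const ‖v‖
  have hlim1 : Filter.Tendsto (fun m => (∑ j ∈ Finset.range m, g j) y) Filter.atTop (nhds (A y)) :=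
    ((ContinuousLinearMap.apply 𝕜 X y).continuous.tendsto A).comp hAsum.tendsto_sum_nat
  have hlim2 : Filter.Tendsto (fun m => (∑ j ∈ Finset.range m, g j) y) Filter.atTop (nhds v) := by
    simp_rw [hpart]
    simpa using tendsto_const_nhds.sub humto
  exact tendsto_nhds_unique hlim1 hlim2

/-- Let `X` be a nonzero Banach space and `𝔄` a norm-closed, strictly semi-transitive
subalgebra of `L(X)`.  Then the set of strictly cyclic vectors for `𝔄` is residual in `X`;
in particular, `𝔄` has a strictly cyclic vector. -/
theorem stmt_15 {𝕜 X : Type*} [RCLike 𝕜]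
    [NormedAddCommGroup X] [NormedSpace 𝕜 X] [CompleteSpace X] [Nontrivial X]
    (𝔄 : NonUnitalSubalgebra 𝕜 (X →L[𝕜] X))
    (hclosed : IsClosed (𝔄 : Set (X →L[𝕜] X)))
    (hsst : ∀ x y : X, x ≠ 0 → y ≠ 0 → ∃ A ∈ 𝔄, A x = y ∨ A y = x) :
    {x : X | ∀ y : X, ∃ A ∈ 𝔄, A x = y} ∈ residual X ∧
      ∃ x : X, ∀ y : X, ∃ A ∈ 𝔄, A x = y := by
  classical
  -- the sets of "exactly solvable with norm bound" pairs
  set E : ℕ → Set (X × X) := fun k =>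
    {q : X × X | ∃ A : X →L[𝕜] X, A ∈ 𝔄 ∧ ‖A‖ ≤ (k : ℝ) ∧ A q.1 = q.2} with hE
  set E' : ℕ → Set (X × X) := fun k =>
    {q : X × X | ∃ A : X →L[𝕜] X, A ∈ 𝔄 ∧ ‖A‖ ≤ (k : ℝ) ∧ A q.2 = q.1} with hE'
  have hcover : ∀ q : X × X, ∃ k, q ∈ E k ∨ q ∈ E' k := by
    intro q
    rcases eq_or_ne q.2 0 with h2 | h2
    · exact ⟨0, Or.inl ⟨0, zero_mem _, by simp, by simp [h2]⟩⟩
    rcases eq_or_ne q.1 0 with h1 | h1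
    · exact ⟨0, Or.inr ⟨0, zero_mem _, by simp, by simp [h1]⟩⟩
    obtain ⟨A, hA, hAe⟩ := hsst q.1 q.2 h1 h2
    rcases hAe with h | h
    · exact ⟨⌈‖A‖⌉₊, Or.inl ⟨A, hA, Nat.le_ceil _, h⟩⟩
    · exact ⟨⌈‖A‖⌉₊, Or.inr ⟨A, hA, Nat.le_ceil _, h⟩⟩
  -- Baire category in `X × X`
  obtain ⟨i, hi⟩ := nonempty_interior_of_iUnion_of_closed
    (f := fun i : ℕ ⊕ ℕ => Sum.elim (fun k => closure (E k)) (fun k => closure (E' k)) i)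
    (fun i => by cases i <;> exact isClosed_closure)
    (by
      rw [Set.eq_univ_iff_forall]
      intro q
      obtain ⟨k, hk | hk⟩ := hcover q
      · exact Set.mem_iUnion.mpr ⟨Sum.inl k, subset_closure hk⟩
      · exact Set.mem_iUnion.mpr ⟨Sum.inr k, subset_closure hk⟩)
  have main : ∃ (k : ℕ) (p : X × X), p ∈ interior (closure (E k)) := by
    cases i with
    | inl k => obtain ⟨p, hp⟩ := hi; exact ⟨k, p, hp⟩
    | inr k =>
      obtain ⟨q, hq⟩ := hi
      have hE'k : E' k = (Homeomorph.prodComm X X) ⁻¹' (E k) := by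
        ext q'
        constructor
        · rintro ⟨A, h1, h2, h3⟩; exact ⟨A, h1, h2, h3⟩
        · rintro ⟨A, h1, h2, h3⟩; exact ⟨A, h1, h2, h3⟩
      simp only [Sum.elim_inr] at hq
      rw [hE'k, ← Homeomorph.preimage_closure, ← Homeomorph.preimage_interior] at hq
      exact ⟨k, _, hq⟩
  obtain ⟨k, p, hp⟩ := main
  obtain ⟨r, hr, hball⟩ := Metric.isOpen_iff.mp isOpen_interior p hp
  have hsub : Metric.ball p r ⊆ closure (E k) := hball.trans interior_subset
  have hbox : ∀ y t : X, dist y p.1 < r → dist t p.2 < r → (y, t) ∈ closure (E k) := by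
    intro y t h1 h2
    apply hsub
    rw [Metric.mem_ball, Prod.dist_eq]
    exact max_lt h1 h2
  -- every point of the ball around `p.1` is strictly cyclic
  have hcyc : ∀ y : X, dist y p.1 < r → ∀ v : X, ∃ A ∈ 𝔄, A y = v := by
    intro y hy
    apply cyclic_of_approx' 𝔄 hclosed y (2 * (k : ℝ)) r (by positivity) hr
    intro w hw ε hε
    have hδ : 0 < ε / (2 * ((k : ℝ) + 1)) := by positivity
    set δ := ε / (2 * ((k : ℝ) + 1)) with hδ_def
    have get : ∀ t : X, dist t p.2 < r →
        ∃ A ∈ 𝔄, ‖A‖ ≤ (k : ℝ) ∧ ‖A y - t‖ < ((k : ℝ) + 1) * δ := by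
      intro t ht
      obtain ⟨q, hqE, hqd⟩ := Metric.mem_closure_iff.mp (hbox y t hy ht) δ hδ
      obtain ⟨A, hAm, hAn, hAe⟩ := hqE
      have hd1 : dist y q.1 < δ := by
        calc dist y q.1 ≤ dist (y, t) q := by rw [Prod.dist_eq]; exact le_max_left _ _
          _ < δ := hqd
      have hd2 : dist t q.2 < δ := by
        calc dist t q.2 ≤ dist (y, t) q := by rw [Prod.dist_eq]; exact le_max_right _ _
          _ < δ := hqd
      refine ⟨A, hAm, hAn, ?_⟩
      have hid : A y - t = A (y - q.1) + (q.2 - t) := by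
        rw [map_sub, hAe]; abel
      calc ‖A y - t‖ = ‖A (y - q.1) + (q.2 - t)‖ := by rw [hid]
        _ ≤ ‖A (y - q.1)‖ + ‖q.2 - t‖ := norm_add_le _ _
        _ ≤ ‖A‖ * ‖y - q.1‖ + ‖q.2 - t‖ := by
            have := A.le_opNorm (y - q.1)
            linarith
        _ < (k : ℝ) * δ + δ := by
            have h1 : ‖A‖ * ‖y - q.1‖ ≤ (k : ℝ) * δ := by
              apply mul_le_mul hAn _ (norm_nonneg _) (Nat.cast_nonneg k)
              rw [← dist_eq_norm]
              exact hd1.le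
            have h2 : ‖q.2 - t‖ < δ := by
              rw [← dist_eq_norm, dist_comm]
              exact hd2
            linarith
        _ = ((k : ℝ) + 1) * δ := by ring
    obtain ⟨A₁, h₁m, h₁n, h₁e⟩ := get (p.2 + w) (by
      rw [dist_eq_norm]
      simpa using hw)
    obtain ⟨A₂, h₂m, h₂n, h₂e⟩ := get (p.2 - w) (by
      rw [dist_eq_norm]
      simpa using hw)
    refine ⟨A₁ - A₂, sub_mem h₁m h₂m, ?_, ?_⟩
    · calc ‖A₁ - A₂‖ ≤ ‖A₁‖ + ‖A₂‖ := norm_sub_le _ _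
        _ ≤ (k : ℝ) + (k : ℝ) := add_le_add h₁n h₂n
        _ = 2 * (k : ℝ) := by ring
    · have hid : (A₁ - A₂) y - (w + w) = (A₁ y - (p.2 + w)) - (A₂ y - (p.2 - w)) := by
        simp only [ContinuousLinearMap.sub_apply]
        abel
      rw [hid]
      calc ‖(A₁ y - (p.2 + w)) - (A₂ y - (p.2 - w))‖
          ≤ ‖A₁ y - (p.2 + w)‖ + ‖A₂ y - (p.2 - w)‖ := norm_sub_le _ _
        _ < ((k : ℝ) + 1) * δ + ((k : ℝ) + 1) * δ := add_lt_add h₁e h₂e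
        _ = ε := by rw [hδ_def]; field_simp; ring
  have hc : ∀ v : X, ∃ A ∈ 𝔄, A p.1 = v := hcyc p.1 (by simpa using hr)
  -- the set of non-cyclic vectors is a linear subspace
  set NN : Submodule 𝕜 X :=
    { carrier := {x : X | ¬ ∀ v : X, ∃ A ∈ 𝔄, A x = v}
      zero_mem' := by
        intro h
        obtain ⟨v, hv⟩ := exists_ne (0 : X)
        obtain ⟨A, _, hAe⟩ := h v
        exact hv (by rw [← hAe, map_zero])
      add_mem' := by
        intro a b ha hb hab
        rcases eq_or_ne a 0 with rfl | ha0
        · exact hb (by simpa using hab)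
        rcases eq_or_ne b 0 with rfl | hb0
        · exact ha (by simpa using hab)
        obtain ⟨A, hA, hc'⟩ := hsst a b ha0 hb0
        rcases hc' with h | h
        · apply ha
          intro v
          obtain ⟨B, hB, hBe⟩ := hab v
          refine ⟨B + B * A, add_mem hB (mul_mem hB hA), ?_⟩
          have : (B + B * A) a = B a + B (A a) := by
            simp [ContinuousLinearMap.add_apply, ContinuousLinearMap.mul_apply]
          rw [this, h, ← map_add, hBe]
        · apply hb
          intro v
          obtain ⟨B, hB, hBe⟩ := hab v
          refine ⟨B + B * A, add_mem hB (mul_mem hB hA), ?_⟩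
          have : (B + B * A) b = B b + B (A b) := by
            simp [ContinuousLinearMap.add_apply, ContinuousLinearMap.mul_apply]
          rw [this, h, ← map_add, add_comm b a, hBe]
      smul_mem' := by
        intro c x hx h
        rcases eq_or_ne c 0 with rfl | hc0
        · obtain ⟨v, hv⟩ := exists_ne (0 : X)
          obtain ⟨A, _, hAe⟩ := h v
          rw [zero_smul] at hAe
          exact hv (by rw [← hAe, map_zero])
        · apply hx
          intro v
          obtain ⟨B, hB, hBe⟩ := h v
          refine ⟨c • B, SMulMemClass.smul_mem _ hB, ?_⟩
          rw [ContinuousLinearMap.smul_apply, ← map_smul, hBe] } with hNN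
  have hNNmem : ∀ x : X, x ∈ NN ↔ ¬ ∀ v : X, ∃ A ∈ 𝔄, A x = v := fun x => Iff.rfl
  -- the closure of NN has empty interior
  have hint : interior (closure (NN : Set X)) = ∅ := by
    rw [Set.eq_empty_iff_forall_notMem]
    intro x hx
    obtain ⟨ε, hε, hbx⟩ := Metric.isOpen_iff.mp isOpen_interior x hx
    set M := NN.topologicalClosure with hM
    have hMc : (M : Set X) = closure (NN : Set X) := Submodule.topologicalClosure_coe NN
    have hxM : x ∈ M := by
      rw [← SetLike.mem_coe, hMc]
      exact interior_subset hx
    have hall : ∀ v : X, v ∈ M := by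
      intro v
      rcases eq_or_ne (v - x) 0 with hd | hd
      · have : v = x := by rwa [sub_eq_zero] at hd
        rw [this]; exact hxM
      · set d := v - x with hd_def
        have hd' : 0 < ‖d‖ := norm_pos_iff.mpr hd
        set a : ℝ := ε / (2 * ‖d‖) with ha_def
        have ha : 0 < a := by positivity
        have hz : x + ((a : ℝ) : 𝕜) • d ∈ Metric.ball x ε := by
          rw [Metric.mem_ball, dist_eq_norm]
          have : x + ((a : ℝ) : 𝕜) • d - x = ((a : ℝ) : 𝕜) • d := by abel
          rw [this, norm_smul ((a : ℝ) : 𝕜) d, RCLike.norm_ofReal, abs_of_pos ha]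
          rw [ha_def]
          calc ε / (2 * ‖d‖) * ‖d‖ = ε / 2 := by field_simp
            _ < ε := by linarith
        have hzM : x + ((a : ℝ) : 𝕜) • d ∈ M := by
          rw [← SetLike.mem_coe, hMc]
          exact interior_subset (hbx hz)
        have hdM : ((a : ℝ) : 𝕜) • d ∈ M := by
          have := M.sub_mem hzM hxM
          simpa using this
        have hdM' : d ∈ M := by
          have h2 := M.smul_mem (((a : ℝ) : 𝕜)⁻¹) hdM
          rwa [smul_smul, inv_mul_cancel₀ (by
            simpa using ha.ne' : ((a : ℝ) : 𝕜) ≠ 0), one_smul] at h2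
        have : d + x ∈ M := M.add_mem hdM' hxM
        rwa [hd_def, sub_add_cancel] at this
    have hp1 : p.1 ∈ closure (NN : Set X) := by
      rw [← hMc]
      exact SetLike.mem_coe.mpr (hall p.1)
    obtain ⟨b, hbNN, hbd⟩ := Metric.mem_closure_iff.mp hp1 r hr
    exact hbNN (hcyc b (by rwa [dist_comm] at hbd))
  constructor
  · -- residual
    rw [mem_residual]
    refine ⟨(closure (NN : Set X))ᶜ, ?_, isClosed_closure.isOpen_compl.isGδ, ?_⟩
    · intro x hx
      by_contra hxS
      exact hx (subset_closure hxS)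
    · exact interior_eq_empty_iff_dense_compl.mp hint
  · exact ⟨p.1, hc⟩
end

section
/- Let X be a Banach space (real or complex) and let Y₁ and Y₂ be operator ranges in X. Then Y₁ + Y₂ and Y₁ ∩ Y₂ are operator ranges in X. -/
open Submodule



/-- A linear subspace `Y` of a Banach space `X` is an *operator range* if there are
`n ≥ 1`, a closed subspace `M ⊆ Xⁿ`, and a bounded linear operator `T : M → X` with
`Y = range T`. -/
def IsOperatorRange (𝕜 : Type*) {X : Type*} [RCLike 𝕜]
    [NormedAddCommGroup X] [NormedSpace 𝕜 X] (Y : Submodule 𝕜 X) : Prop :=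
  ∃ n : ℕ, 1 ≤ n ∧ ∃ M : Submodule 𝕜 (Fin n → X), IsClosed (M : Set (Fin n → X)) ∧
    ∃ T : M →L[𝕜] X, (Y : Set X) = Set.range T


/-- Let `X` be a Banach space (real or complex) and `Y₁`, `Y₂` operator ranges in `X`.
Then `Y₁ + Y₂` and `Y₁ ∩ Y₂` are operator ranges in `X`. -/
theorem stmt_17 {𝕜 X : Type*} [RCLike 𝕜]
    [NormedAddCommGroup X] [NormedSpace 𝕜 X] [CompleteSpace X]
    (Y₁ Y₂ : Submodule 𝕜 X)
    (h₁ : IsOperatorRange 𝕜 Y₁) (h₂ : IsOperatorRange 𝕜 Y₂) :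
    IsOperatorRange 𝕜 (Y₁ ⊔ Y₂) ∧ IsOperatorRange 𝕜 (Y₁ ⊓ Y₂) := by
  obtain ⟨n₁, hn₁, M₁, hM₁, T₁, hT₁⟩ := h₁
  obtain ⟨n₂, hn₂, M₂, hM₂, T₂, hT₂⟩ := h₂
  set p₁ : (Fin (n₁ + n₂) → X) →L[𝕜] (Fin n₁ → X) :=
    ContinuousLinearMap.pi fun i => ContinuousLinearMap.proj (Fin.castAdd n₂ i) with hp₁
  set p₂ : (Fin (n₁ + n₂) → X) →L[𝕜] (Fin n₂ → X) :=
    ContinuousLinearMap.pi fun i => ContinuousLinearMap.proj (Fin.natAdd n₁ i) with hp₂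
  set M : Submodule 𝕜 (Fin (n₁ + n₂) → X) :=
    (M₁.comap (p₁ : (Fin (n₁+n₂) → X) →ₗ[𝕜] (Fin n₁ → X))) ⊓
    (M₂.comap (p₂ : (Fin (n₁+n₂) → X) →ₗ[𝕜] (Fin n₂ → X))) with hM
  have hMc : IsClosed (M : Set (Fin (n₁+n₂) → X)) := by
    have : (M : Set (Fin (n₁+n₂) → X)) = p₁ ⁻¹' M₁ ∩ p₂ ⁻¹' M₂ := rfl
    rw [this]
    exact (hM₁.preimage p₁.continuous).inter (hM₂.preimage p₂.continuous)
  set q₁ : M →L[𝕜] M₁ :=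
    ContinuousLinearMap.codRestrict (p₁.comp M.subtypeL) M₁ (fun x => x.2.1) with hq₁
  set q₂ : M →L[𝕜] M₂ :=
    ContinuousLinearMap.codRestrict (p₂.comp M.subtypeL) M₂ (fun x => x.2.2) with hq₂
  -- membership of appended vectors
  have happ : ∀ (m₁ : M₁) (m₂ : M₂), Fin.append m₁.1 m₂.1 ∈ M := by
    intro m₁ m₂
    constructor
    · show p₁ _ ∈ M₁
      have : p₁ (Fin.append m₁.1 m₂.1) = m₁.1 := by
        funext i; simp [hp₁, Fin.append_left]
      rw [this]; exact m₁.2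
    · show p₂ _ ∈ M₂
      have : p₂ (Fin.append m₁.1 m₂.1) = m₂.1 := by
        funext i; simp [hp₂, Fin.append_right]
      rw [this]; exact m₂.2
  have hq₁app : ∀ (m₁ : M₁) (m₂ : M₂), q₁ ⟨Fin.append m₁.1 m₂.1, happ m₁ m₂⟩ = m₁ := by
    intro m₁ m₂
    apply Subtype.ext
    funext i
    show p₁ (Fin.append m₁.1 m₂.1) i = m₁.1 i
    simp [hp₁, Fin.append_left]
  have hq₂app : ∀ (m₁ : M₁) (m₂ : M₂), q₂ ⟨Fin.append m₁.1 m₂.1, happ m₁ m₂⟩ = m₂ := by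
    intro m₁ m₂
    apply Subtype.ext
    funext i
    show p₂ (Fin.append m₁.1 m₂.1) i = m₂.1 i
    simp [hp₂, Fin.append_right]
  constructor
  · refine ⟨n₁ + n₂, by omega, M, hMc, T₁.comp q₁ + T₂.comp q₂, ?_⟩
    ext x
    constructor
    · intro hx
      obtain ⟨y₁, hy₁, y₂, hy₂, rfl⟩ := Submodule.mem_sup.1 hx
      have : y₁ ∈ Set.range T₁ := hT₁ ▸ hy₁
      obtain ⟨m₁, rfl⟩ := this
      have : y₂ ∈ Set.range T₂ := hT₂ ▸ hy₂
      obtain ⟨m₂, rfl⟩ := this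
      exact ⟨⟨Fin.append m₁.1 m₂.1, happ m₁ m₂⟩, by
        simp [ContinuousLinearMap.add_apply, hq₁app, hq₂app]⟩
    · rintro ⟨m, rfl⟩
      apply Submodule.add_mem_sup
      · show (T₁ (q₁ m) : X) ∈ Y₁
        have : (T₁ (q₁ m) : X) ∈ Set.range T₁ := ⟨q₁ m, rfl⟩
        rwa [← hT₁] at this
      · have : (T₂ (q₂ m) : X) ∈ Set.range T₂ := ⟨q₂ m, rfl⟩
        rwa [← hT₂] at this
  · set S : M →L[𝕜] X := T₁.comp q₁ - T₂.comp q₂ with hS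
    set M' : Submodule 𝕜 (Fin (n₁+n₂) → X) := (LinearMap.ker (S : M →ₗ[𝕜] X)).map M.subtype with hM'
    have hM'sub : ∀ x : M', x.1 ∈ M := by
      rintro ⟨x, hx⟩
      obtain ⟨y, hy, rfl⟩ := hx
      exact y.2
    have hM'c : IsClosed (M' : Set (Fin (n₁+n₂) → X)) := by
      have h1 : (M' : Set (Fin (n₁+n₂) → X)) = Subtype.val '' (LinearMap.ker (S : M →ₗ[𝕜] X) : Set M) := rfl
      rw [h1]
      exact (hMc.isClosedEmbedding_subtypeVal).isClosedMap _
        (IsClosed.preimage S.continuous isClosed_singleton)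
    set incl : M' →L[𝕜] M := ContinuousLinearMap.codRestrict M'.subtypeL M hM'sub with hincl
    refine ⟨n₁ + n₂, by omega, M', hM'c, (T₁.comp q₁).comp incl, ?_⟩
    ext x
    constructor
    · rintro ⟨hx₁, hx₂⟩
      have h1 : x ∈ Set.range T₁ := hT₁ ▸ hx₁
      have h2 : x ∈ Set.range T₂ := hT₂ ▸ hx₂
      obtain ⟨m₁, rfl⟩ := h1
      obtain ⟨m₂, hm₂⟩ := h2
      have hmem : (⟨Fin.append m₁.1 m₂.1, happ m₁ m₂⟩ : M) ∈ LinearMap.ker (S : M →ₗ[𝕜] X) := by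
        rw [LinearMap.mem_ker]
        show T₁ (q₁ _) - T₂ (q₂ _) = 0
        rw [hq₁app, hq₂app, hm₂, sub_self]
      refine ⟨⟨Fin.append m₁.1 m₂.1, ⟨_, hmem, rfl⟩⟩, ?_⟩
      show T₁ (q₁ (incl _)) = T₁ m₁
      congr 1
      have : incl ⟨Fin.append m₁.1 m₂.1, ⟨_, hmem, rfl⟩⟩ = ⟨Fin.append m₁.1 m₂.1, happ m₁ m₂⟩ :=
        Subtype.ext rfl
      rw [this, hq₁app]
    · rintro ⟨m, rfl⟩
      have hker : S (incl m) = 0 := by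
        obtain ⟨x, hx⟩ := m
        obtain ⟨y, hy, rfl⟩ := hx
        have h5 : incl ⟨M.subtype y, ⟨y, hy, rfl⟩⟩ = y := Subtype.ext rfl
        rw [h5]
        exact hy
      have heq : T₁ (q₁ (incl m)) = T₂ (q₂ (incl m)) := by
        have := hker
        rw [hS] at this
        simpa [sub_eq_zero] using this
      constructor
      · have : (T₁ (q₁ (incl m)) : X) ∈ Set.range T₁ := ⟨_, rfl⟩
        rw [← hT₁] at this
        exact this
      · show ((T₁.comp q₁).comp incl) m ∈ Y₂
        have : (T₂ (q₂ (incl m)) : X) ∈ Set.range T₂ := ⟨_, rfl⟩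
        rw [← hT₂] at this
        simpa [heq] using this
end
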